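/- arXiv:2410.01432 — 3 statements merged into one kernel-verified Lean document; each statement's English description precedes it below -/
import Mathlib

section
/- Suppose the trajectory-balance discrepancy vanishes on every trajectory, i.e. δ(τ) = log R(end(τ)) + log P_B(τ) − log Z − log P_F(τ) = 0 for all τ ∈ T. Then for every terminal state x ∈ X, the terminating distribution satisfies P_F^⊤(x) = R(x) / (∑_{x'∈X} R(x')), i.e. the forward policy samples terminal states with probability proportional to the reward. -/
/-- If the trajectory-balance discrepancy vanishes on every
trajectory, then the terminating distribution of the forward policy samples
terminal states with probability proportional to the reward. -/
theorem tb_zero_implies_reward_matching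
    {X T : Type*} [Fintype X] [Fintype T] [Nonempty X] [Nonempty T]
    [DecidableEq X]
    (endT : T → X) (hend : Function.Surjective endT)
    (PF : T → ℝ) (hPFpos : ∀ τ, 0 < PF τ) (hPFsum : ∑ τ, PF τ = 1)
    (PB : T → ℝ) (hPBpos : ∀ τ, 0 < PB τ)
    (hPBsum : ∀ x : X, ∑ τ ∈ Finset.univ.filter (fun τ => endT τ = x), PB τ = 1)
    (R : X → ℝ) (hR : ∀ x, 0 < R x)
    (Z : ℝ) (hZ : 0 < Z)
    (hδ : ∀ τ, Real.log (R (endT τ)) + Real.log (PB τ)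
            - Real.log Z - Real.log (PF τ) = 0) :
    ∀ x : X, ∑ τ ∈ Finset.univ.filter (fun τ => endT τ = x), PF τ
      = R x / ∑ x' : X, R x' := by
  -- From δ = 0 we get PF τ = R(end τ) * PB τ / Z
  have hPF : ∀ τ, PF τ = R (endT τ) * PB τ / Z := by
    intro τ
    have h := hδ τ
    have h1 : Real.log (R (endT τ) * PB τ) = Real.log (Z * PF τ) := by
      rw [Real.log_mul (hR _).ne' (hPBpos τ).ne',
          Real.log_mul hZ.ne' (hPFpos τ).ne']
      linarith
    have h2 : R (endT τ) * PB τ = Z * PF τ :=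
      Real.log_injOn_pos.eq_iff
        (Set.mem_Ioi.mpr (mul_pos (hR _) (hPBpos τ)))
        (Set.mem_Ioi.mpr (mul_pos hZ (hPFpos τ))) |>.mp h1
    field_simp
    linarith
  -- sum of PF over filter x equals R x / Z
  have hsumx : ∀ x : X, ∑ τ ∈ Finset.univ.filter (fun τ => endT τ = x), PF τ
      = R x / Z := by
    intro x
    have : ∑ τ ∈ Finset.univ.filter (fun τ => endT τ = x), PF τ
        = ∑ τ ∈ Finset.univ.filter (fun τ => endT τ = x), R x * PB τ / Z := by
      apply Finset.sum_congr rfl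
      intro τ hτ
      have hx : endT τ = x := (Finset.mem_filter.mp hτ).2
      rw [hPF τ, hx]
    rw [this]
    rw [show (fun τ => R x * PB τ / Z) = fun τ => (R x / Z) * PB τ by
      funext τ; ring]
    rw [← Finset.mul_sum, hPBsum x, mul_one]
  -- Z = ∑ R
  have hZsum : Z = ∑ x' : X, R x' := by
    have h1 : ∑ x : X, (R x / Z) = 1 := by
      rw [← hPFsum]
      rw [← Finset.sum_fiberwise_of_maps_to (g := endT)
        (fun τ _ => Finset.mem_univ (endT τ)) PF]
      exact Finset.sum_congr rfl fun x _ => (hsumx x).symm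
    have h2 : (∑ x : X, R x) / Z = 1 := by
      rw [Finset.sum_div]; exact h1
    field_simp at h2
    linarith
  intro x
  rw [hsumx x, hZsum]
end

section
/- Suppose the trajectory-balance discrepancy vanishes on every trajectory, i.e. δ(τ) = log R(end(τ)) + log P_B(τ) − log Z − log P_F(τ) = 0 for all τ ∈ T. Then the normalization constant is forced to equal the total reward: Z = ∑_{x∈X} R(x). -/
/-- If the trajectory-balance discrepancy vanishes on every
trajectory, then the normalization constant equals the total reward. -/
theorem tb_zero_implies_Z_eq_total_reward
    {X T : Type*} [Fintype X] [Fintype T] [Nonempty X] [Nonempty T]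
    [DecidableEq X]
    (endT : T → X) (hend : Function.Surjective endT)
    (PF : T → ℝ) (hPFpos : ∀ τ, 0 < PF τ) (hPFsum : ∑ τ, PF τ = 1)
    (PB : T → ℝ) (hPBpos : ∀ τ, 0 < PB τ)
    (hPBsum : ∀ x : X, ∑ τ ∈ Finset.univ.filter (fun τ => endT τ = x), PB τ = 1)
    (R : X → ℝ) (hR : ∀ x, 0 < R x)
    (Z : ℝ) (hZ : 0 < Z)
    (hδ : ∀ τ, Real.log (R (endT τ)) + Real.log (PB τ)
            - Real.log Z - Real.log (PF τ) = 0) :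
    Z = ∑ x : X, R x := by
  have key : ∀ τ, Z * PF τ = R (endT τ) * PB τ := by
    intro τ
    have h := hδ τ
    have h1 : Real.log (R (endT τ) * PB τ) = Real.log (Z * PF τ) := by
      rw [Real.log_mul (hR _).ne' (hPBpos τ).ne',
          Real.log_mul hZ.ne' (hPFpos τ).ne']
      linarith
    have := Real.log_injOn_pos.eq_iff
      (Set.mem_Ioi.mpr (mul_pos (hR _) (hPBpos τ)))
      (Set.mem_Ioi.mpr (mul_pos hZ (hPFpos τ))) |>.mp h1
    linarith
  calc Z = ∑ τ, Z * PF τ := by rw [← Finset.mul_sum, hPFsum, mul_one]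
    _ = ∑ τ, R (endT τ) * PB τ := by simp_rw [key]
    _ = ∑ x : X, ∑ τ ∈ Finset.univ.filter (fun τ => endT τ = x),
          R (endT τ) * PB τ := by
        rw [Finset.sum_fiberwise]
    _ = ∑ x : X, R x := by
        refine Finset.sum_congr rfl fun x _ => ?_
        rw [Finset.sum_congr rfl (fun τ hτ => ?_), ← Finset.mul_sum, hPBsum, mul_one]
        rw [(Finset.mem_filter.mp hτ).2]
end

section
/- (Proposition on the stationary point of Teacher–Student training.) Let P_β : T → ℝ be a behavior policy with full support, i.e. P_β(τ) > 0 for all τ ∈ T and ∑_{τ∈T} P_β(τ) = 1. Let the Student be a forward trajectory distribution P_F^S with normalization constant Z_S > 0 and reward R, and let the Teacher be a forward trajectory distribution P_F^T with normalization constant Z_T > 0 and reward R_Teacher(x) = ε·R(x)^α for constants ε > 0 and α > 0, both with respect to the same backward kernel P_B. If the expected squared TB losses under the behavior policy are both zero, i.e. ∑_{τ∈T} P_β(τ)·δ_S(τ)² = 0 and ∑_{τ∈T} P_β(τ)·δ_T(τ)² = 0, where δ_S is the TB discrepancy of (P_F^S, Z_S) with reward R and δ_T is the TB discrepancy of (P_F^T,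 Z_T) with reward R_Teacher, then: (a) the Student's terminating distribution satisfies (P_F^S)^⊤(x) = R(x)/(∑_{x'∈X} R(x')) for all x ∈ X, and (b) the Teacher's terminating distribution satisfies (P_F^T)^⊤(x) = R(x)^α/(∑_{x'∈X} R(x')^α) for all x ∈ X. -/
lemma tb_zero_terminating
    {X T : Type*} [Fintype X] [Fintype T] [DecidableEq X]
    (endT : T → X)
    (PF : T → ℝ) (hPFpos : ∀ τ, 0 < PF τ) (hPFsum : ∑ τ, PF τ = 1)
    (Z : ℝ) (hZ : 0 < Z)
    (PB : T → ℝ) (hPBpos : ∀ τ, 0 < PB τ)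
    (hPBsum : ∀ x : X, ∑ τ ∈ Finset.univ.filter (fun τ => endT τ = x), PB τ = 1)
    (r : X → ℝ) (hr : ∀ x, 0 < r x)
    (hδ : ∀ τ, Real.log (r (endT τ)) + Real.log (PB τ)
            - Real.log Z - Real.log (PF τ) = 0) :
    ∀ x : X, ∑ τ ∈ Finset.univ.filter (fun τ => endT τ = x), PF τ
        = r x / ∑ x' : X, r x' := by
  have hPF : ∀ τ, PF τ = r (endT τ) * PB τ / Z := by
    intro τ
    have h := hδ τ
    have hlog : Real.log (PF τ) = Real.log (r (endT τ) * PB τ / Z) := by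
      rw [Real.log_div (mul_pos (hr _) (hPBpos τ)).ne' hZ.ne', Real.log_mul (hr _).ne' (hPBpos τ).ne']
      linarith
    have := Real.exp_log (hPFpos τ)
    rw [← Real.exp_log (hPFpos τ), hlog, Real.exp_log (div_pos (mul_pos (hr _) (hPBpos τ)) hZ)]
  have hfib : ∀ x : X, ∑ τ ∈ Finset.univ.filter (fun τ => endT τ = x), PF τ = r x / Z := by
    intro x
    calc ∑ τ ∈ Finset.univ.filter (fun τ => endT τ = x), PF τ
        = ∑ τ ∈ Finset.univ.filter (fun τ => endT τ = x), r x / Z * PB τ := by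
          apply Finset.sum_congr rfl
          intro τ hτ
          rw [Finset.mem_filter] at hτ
          rw [hPF τ, hτ.2]; ring
      _ = r x / Z * ∑ τ ∈ Finset.univ.filter (fun τ => endT τ = x), PB τ := by
          rw [Finset.mul_sum]
      _ = r x / Z := by rw [hPBsum x, mul_one]
  have hZeq : Z = ∑ x' : X, r x' := by
    have h1 : (1 : ℝ) = ∑ x : X, r x / Z := by
      rw [← hPFsum, ← Finset.sum_fiberwise Finset.univ endT PF]
      exact Finset.sum_congr rfl (fun x _ => hfib x)
    have h2 : (∑ x : X, r x / Z) = (∑ x : X, r x) / Z := by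
      rw [Finset.sum_div]
    rw [h2] at h1
    field_simp at h1
    linarith
  intro x
  rw [hfib x, hZeq]



/-- Stationary point of Teacher–Student training. If the expected
squared TB losses of the Student (with reward `R`) and the Teacher (with
reward `ε · R(x)^α`) both vanish under a full-support behavior policy, then
the Student samples proportionally to `R` and the Teacher proportionally
to `R^α`. -/
theorem teacher_student_stationary_point
    {X T : Type*} [Fintype X] [Fintype T] [Nonempty X] [Nonempty T]
    [DecidableEq X]
    (endT : T → X) (hend : Function.Surjective endT)
    -- behavior policy with full support
    (Pβ : T → ℝ) (hPβpos : ∀ τ, 0 < Pβ τ) (hPβsum : ∑ τ, Pβ τ = 1)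
    -- Student forward distribution and normalization constant
    (PFS : T → ℝ) (hPFSpos : ∀ τ, 0 < PFS τ) (hPFSsum : ∑ τ, PFS τ = 1)
    (ZS : ℝ) (hZS : 0 < ZS)
    -- Teacher forward distribution and normalization constant
    (PFT : T → ℝ) (hPFTpos : ∀ τ, 0 < PFT τ) (hPFTsum : ∑ τ, PFT τ = 1)
    (ZT : ℝ) (hZT : 0 < ZT)
    -- shared backward kernel
    (PB : T → ℝ) (hPBpos : ∀ τ, 0 < PB τ)
    (hPBsum : ∀ x : X, ∑ τ ∈ Finset.univ.filter (fun τ => endT τ = x), PB τ = 1)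
    -- reward and constants
    (R : X → ℝ) (hR : ∀ x, 0 < R x)
    (ε : ℝ) (hε : 0 < ε) (α : ℝ) (hα : 0 < α)
    -- zero expected squared TB losses
    (hS : ∑ τ, Pβ τ * (Real.log (R (endT τ)) + Real.log (PB τ)
            - Real.log ZS - Real.log (PFS τ)) ^ 2 = 0)
    (hT : ∑ τ, Pβ τ * (Real.log (ε * R (endT τ) ^ α) + Real.log (PB τ)
            - Real.log ZT - Real.log (PFT τ)) ^ 2 = 0) :
    (∀ x : X, ∑ τ ∈ Finset.univ.filter (fun τ => endT τ = x), PFS τ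
        = R x / ∑ x' : X, R x')
    ∧ (∀ x : X, ∑ τ ∈ Finset.univ.filter (fun τ => endT τ = x), PFT τ
        = R x ^ α / ∑ x' : X, R x' ^ α) := by
  have zero_of_sum : ∀ (f : T → ℝ),
      (∑ τ, Pβ τ * (f τ) ^ 2 = 0) → ∀ τ, f τ = 0 := by
    intro f hsum τ
    have hterm : ∀ τ ∈ Finset.univ, 0 ≤ Pβ τ * (f τ) ^ 2 := fun τ _ => mul_nonneg (hPβpos τ).le (sq_nonneg _)
    have := (Finset.sum_eq_zero_iff_of_nonneg hterm).mp hsum τ (Finset.mem_univ τ)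
    have hPβ := (hPβpos τ).ne'
    have : (f τ) ^ 2 = 0 := by
      rcases mul_eq_zero.mp this with h | h
      · exact absurd h hPβ
      · exact h
    exact pow_eq_zero_iff (n := 2) (by norm_num) |>.mp this
  have hδS := zero_of_sum _ hS
  have hδT := zero_of_sum _ hT
  constructor
  · exact tb_zero_terminating endT PFS hPFSpos hPFSsum ZS hZS PB hPBpos hPBsum R hR hδS
  · have hT' := tb_zero_terminating endT PFT hPFTpos hPFTsum ZT hZT PB hPBpos hPBsum
      (fun x => ε * R x ^ α) (fun x => mul_pos hε (Real.rpow_pos_of_pos (hR x) α)) hδT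
    intro x
    rw [hT' x, ← Finset.mul_sum]
    rw [mul_div_mul_left _ _ hε.ne']
end
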